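/- Fix constants $1 \le r \le p \le \beta \le \infty$ with $p \le q$ given by $1/p - 1/q = 1/\beta$ (all extended reals with the convention $1/\infty = 0$), and let $\omega$ be a weight on $\mathbb{R}^n$. Define, for a cube $Q$, the averaging operator $\mathbf{A}_{\beta, r, Q} f = \chi_Q \, |Q|^{1/\beta} \, |Q|^{-1/r} \|f\chi_Q\|_r$. If $\omega$ satisfies $\|\omega\chi_Q\|_q \, \|\omega^{-1}\chi_Q\|_{\frac{pr}{p-r}} \le C_0 \, |Q|^{\frac{\beta - r}{\beta r}}$ uniformly over cubes $Q$ (with the convention that the exponent $\frac{pr}{p-r}$ equals $\infty$ when $p = r$), then there is a constant $C$ such that $\|(\mathbf{A}_{\beta, r, Q} f)\,\omega\|_q \le C \, \|f\omega\|_p$ uniformly over cubes $Q$ and functions $f$. -/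

import Mathlib

open MeasureTheory Set ENNReal

/-- The axis-parallel cube in `ℝⁿ` with center `c` and side length `ℓ`. -/
def cube (n : ℕ) (c : Fin n → ℝ) (ℓ : ℝ) : Set (Fin n → ℝ) :=
  {x | ∀ i, |x i - c i| ≤ ℓ / 2}

/-- Constant-exponent case of Proposition 3.2(2) (sufficiency).
Exponents: `1 ≤ r ≤ p ≤ β ≤ ∞` with `1/p = 1/q + 1/β`; `t = pr/(p-r)` is
encoded by `1/r = 1/p + 1/t` and `u = βr/(β-r)` by `1/r = 1/β + 1/u`.
If `‖ωχ_Q‖_q ‖ω⁻¹χ_Q‖_t ≤ C₀ |Q|^{1/u}` uniformly over cubes, then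
`‖(A_{β,r,Q} f) ω‖_q ≤ C ‖fω‖_p` uniformly over cubes `Q` and functions `f`,
where `A_{β,r,Q} f = χ_Q |Q|^{1/β} |Q|^{-1/r} ‖fχ_Q‖_r`, so that
`‖(A_{β,r,Q} f) ω‖_q = |Q|^{1/β} |Q|^{-1/r} ‖fχ_Q‖_r ‖ωχ_Q‖_q`. -/
theorem stmt15 (n : ℕ) (r p : ℝ) (hr : 1 ≤ r) (hrp : r ≤ p)
    (β q t u : ℝ≥0∞)
    (hpβ : ENNReal.ofReal p ≤ β)
    (hpq : 1 / ENNReal.ofReal p = 1 / q + 1 / β)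
    (ht : 1 / ENNReal.ofReal r = 1 / ENNReal.ofReal p + 1 / t)
    (hu : 1 / ENNReal.ofReal r = 1 / β + 1 / u)
    (ω : (Fin n → ℝ) → ℝ) (hω : Measurable ω) (hωpos : ∀ x, 0 < ω x)
    (C0 : ℝ)
    (hw : ∀ (c : Fin n → ℝ) (ℓ : ℝ), 0 < ℓ →
      eLpNorm ((cube n c ℓ).indicator ω) q volume *
        eLpNorm ((cube n c ℓ).indicator fun x => (ω x)⁻¹) t volume ≤
      ENNReal.ofReal C0 * volume (cube n c ℓ) ^ (1 / u).toReal) :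
    ∃ C : ℝ, ∀ (c : Fin n → ℝ) (ℓ : ℝ), 0 < ℓ →
      ∀ f : (Fin n → ℝ) → ℝ, Measurable f →
        volume (cube n c ℓ) ^ (1 / β).toReal *
          (volume (cube n c ℓ) ^ (1 / r))⁻¹ *
          eLpNorm ((cube n c ℓ).indicator f) (ENNReal.ofReal r) volume *
          eLpNorm ((cube n c ℓ).indicator ω) q volume ≤
        ENNReal.ofReal C * eLpNorm (fun x => f x * ω x) (ENNReal.ofReal p) volume := by
  have hr0 : (0:ℝ) < r := lt_of_lt_of_le one_pos hr
  refine ⟨C0, fun c ℓ hℓ f hf => ?_⟩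
  set Q := cube n c ℓ with hQdef
  -- cube as an Icc
  have hQ : Q = Icc (fun i => c i - ℓ/2) (fun i => c i + ℓ/2) := by
    ext x
    simp only [hQdef, cube, mem_setOf_eq, Set.mem_Icc, Pi.le_def, abs_le]
    constructor
    · intro h
      exact ⟨fun i => by linarith [(h i).1], fun i => by linarith [(h i).2]⟩
    · intro h i
      exact ⟨by linarith [h.1 i], by linarith [h.2 i]⟩
  have hQmeas : MeasurableSet Q := hQ ▸ measurableSet_Icc
  have hV : volume Q = ENNReal.ofReal ℓ ^ n := by
    rw [hQ]
    have : ∀ i : Fin n, (c i + ℓ/2) - (c i - ℓ/2) = ℓ := fun i => by ring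
    simp [Real.volume_Icc_pi, this, Finset.prod_const]
  have hV0 : volume Q ≠ 0 := by
    rw [hV]
    simp [pow_eq_zero_iff', ENNReal.ofReal_eq_zero, not_le, hℓ]
  have hVtop : volume Q ≠ ∞ := by
    rw [hV]; exact pow_ne_top ofReal_ne_top
  -- exponent arithmetic
  have hrinv : 1 / ENNReal.ofReal r = ENNReal.ofReal (1/r) := by
    rw [one_div, one_div, ← ENNReal.ofReal_inv_of_pos hr0]
  have hfin : 1 / β ≠ ∞ ∧ 1 / u ≠ ∞ := by
    constructor <;>
    · intro h
      rw [hrinv] at hu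
      rw [h] at hu
      simp [ENNReal.add_eq_top] at hu
  have hsum : (1 / β).toReal + (1 / u).toReal = 1 / r := by
    have := congrArg ENNReal.toReal hu
    rw [hrinv, ENNReal.toReal_ofReal (by positivity),
      ENNReal.toReal_add hfin.1 hfin.2] at this
    linarith
  -- key power identity
  have hpow : volume Q ^ (1 / β).toReal * (volume Q ^ ((1:ℝ) / r))⁻¹ *
      volume Q ^ (1 / u).toReal = 1 := by
    have h1 : volume Q ^ (1 / β).toReal * volume Q ^ (1 / u).toReal
        = volume Q ^ ((1:ℝ)/r) := by
      rw [← ENNReal.rpow_add _ _ hV0 hVtop, hsum]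
    have h2 : volume Q ^ (1 / β).toReal * (volume Q ^ ((1:ℝ)/r))⁻¹ * volume Q ^ (1 / u).toReal
        = volume Q ^ (1 / β).toReal * volume Q ^ (1 / u).toReal * (volume Q ^ ((1:ℝ)/r))⁻¹ := by
      ring
    rw [h2, h1]
    exact ENNReal.mul_inv_cancel (by simp [ENNReal.rpow_eq_zero_iff, hV0, hVtop])
      (by simp [ENNReal.rpow_eq_top_iff, hV0, hVtop])
  -- Hölder
  have hind : Q.indicator f =
      (Q.indicator fun x => (ω x)⁻¹) • (Q.indicator fun x => f x * ω x) := by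
    ext x
    by_cases hx : x ∈ Q
    · simp only [Pi.smul_apply, smul_eq_mul, Set.indicator_of_mem hx]
      field_simp
      rw [Pi.mul_apply, Set.indicator_of_mem hx, Set.indicator_of_mem hx, one_div, inv_mul_eq_div,
        mul_div_assoc, div_self (hωpos x).ne', mul_one]
    · simp [Set.indicator_of_notMem hx]
  have h1 : eLpNorm (Q.indicator f) (ENNReal.ofReal r) volume ≤
      eLpNorm (Q.indicator fun x => (ω x)⁻¹) t volume *
        eLpNorm (Q.indicator fun x => f x * ω x) (ENNReal.ofReal p) volume := by
    rw [hind]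
    exact eLpNorm_smul_le_mul_eLpNorm
      (((hf.mul hω).indicator hQmeas).aestronglyMeasurable)
      ((hω.inv.indicator hQmeas).aestronglyMeasurable)
      (hpqr := ⟨by simp only [one_div] at ht; rw [ht, add_comm]⟩)
  have h2 : eLpNorm (Q.indicator fun x => f x * ω x) (ENNReal.ofReal p) volume ≤
      eLpNorm (fun x => f x * ω x) (ENNReal.ofReal p) volume :=
    eLpNorm_indicator_le _
  set Va := volume Q ^ (1 / β).toReal
  set Vr := (volume Q ^ ((1:ℝ) / r))⁻¹
  set Vu := volume Q ^ (1 / u).toReal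
  set Nq := eLpNorm (Q.indicator ω) q volume
  set Nt := eLpNorm (Q.indicator fun x => (ω x)⁻¹) t volume
  set Np := eLpNorm (fun x => f x * ω x) (ENNReal.ofReal p) volume
  calc Va * Vr * eLpNorm (Q.indicator f) (ENNReal.ofReal r) volume * Nq
      ≤ Va * Vr * (Nt * Np) * Nq := by
        gcongr
        exact h1.trans (by gcongr)
    _ = (Nq * Nt) * (Va * Vr * Np) := by ring
    _ ≤ (ENNReal.ofReal C0 * Vu) * (Va * Vr * Np) := mul_le_mul_left (hw c ℓ hℓ) _
    _ = ENNReal.ofReal C0 * Np * (Va * Vr * Vu) := by ring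
    _ = ENNReal.ofReal C0 * Np := by rw [hpow, mul_one]
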